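/- The function V(x,y) = (x² + y²)·(y² − cos(x)) is an inverse integrating factor of the system ẋ = (x+y)cos(x) − y(x²+xy+2y²), ẏ = (y−x)(cos(x)−y²) + ((x²+y²)/2)sin(x); that is, P·∂V/∂x + Q·∂V/∂y = (∂P/∂x + ∂Q/∂y)·V identically on ℝ². -/

import Mathlib

/-- `V(x,y) = (x² + y²)(y² − cos x)` is an inverse integrating factor of the system
`ẋ = (x+y)cos x − y(x²+xy+2y²)`, `ẏ = (y−x)(cos x − y²) + ((x²+y²)/2) sin x`:
`P·V_x + Q·V_y = (P_x + Q_y)·V` identically on `ℝ²`. -/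
theorem stmt_9
    (P Q V : ℝ × ℝ → ℝ)
    (hP : ∀ p : ℝ × ℝ, P p = (p.1 + p.2) * Real.cos p.1
      - p.2 * (p.1 ^ 2 + p.1 * p.2 + 2 * p.2 ^ 2))
    (hQ : ∀ p : ℝ × ℝ, Q p = (p.2 - p.1) * (Real.cos p.1 - p.2 ^ 2)
      + (p.1 ^ 2 + p.2 ^ 2) / 2 * Real.sin p.1)
    (hV : ∀ p : ℝ × ℝ, V p = (p.1 ^ 2 + p.2 ^ 2) * (p.2 ^ 2 - Real.cos p.1)) :
    ∀ p : ℝ × ℝ, P p * fderiv ℝ V p (1, 0) + Q p * fderiv ℝ V p (0, 1)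
      = (fderiv ℝ P p (1, 0) + fderiv ℝ Q p (0, 1)) * V p := by
  have hPf : P = fun p : ℝ × ℝ => (p.1 + p.2) * Real.cos p.1
      - p.2 * (p.1 * p.1 + p.1 * p.2 + 2 * (p.2 * p.2)) := by
    funext p; rw [hP]; ring
  have hQf : Q = fun p : ℝ × ℝ => (p.2 - p.1) * (Real.cos p.1 - p.2 * p.2)
      + 2⁻¹ * (p.1 * p.1 + p.2 * p.2) * Real.sin p.1 := by
    funext p; rw [hQ]; ring
  have hVf : V = fun p : ℝ × ℝ => (p.1 * p.1 + p.2 * p.2) * (p.2 * p.2 - Real.cos p.1) := by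
    funext p; rw [hV]; ring
  subst hPf hQf hVf
  intro p
  obtain ⟨x, y⟩ := p
  have hx : HasFDerivAt (fun p : ℝ × ℝ => p.1) (ContinuousLinearMap.fst ℝ ℝ ℝ) (x, y) :=
    hasFDerivAt_fst
  have hy : HasFDerivAt (fun p : ℝ × ℝ => p.2) (ContinuousLinearMap.snd ℝ ℝ ℝ) (x, y) :=
    hasFDerivAt_snd
  have hcos : HasFDerivAt (fun p : ℝ × ℝ => Real.cos p.1)
      ((-Real.sin x) • ContinuousLinearMap.fst ℝ ℝ ℝ) (x, y) :=
    ((Real.hasDerivAt_cos x).comp_hasFDerivAt (x, y) hx :)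
  have hsin : HasFDerivAt (fun p : ℝ × ℝ => Real.sin p.1)
      ((Real.cos x) • ContinuousLinearMap.fst ℝ ℝ ℝ) (x, y) :=
    ((Real.hasDerivAt_sin x).comp_hasFDerivAt (x, y) hx :)
  have hVd := ((hx.mul hx).add (hy.mul hy)).mul ((hy.mul hy).sub hcos)
  have hPd := ((hx.add hy).mul hcos).sub
    (hy.mul (((hx.mul hx).add (hx.mul hy)).add ((hasFDerivAt_const (2:ℝ) _).mul (hy.mul hy))))
  have hQd := ((hy.sub hx).mul (hcos.sub (hy.mul hy))).add
    (((((hx.mul hx).add (hy.mul hy)).const_mul (2⁻¹:ℝ))).mul hsin)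
  erw [hVd.fderiv, hPd.fderiv, hQd.fderiv]
  simp only [ContinuousLinearMap.add_apply, ContinuousLinearMap.smul_apply,
    ContinuousLinearMap.sub_apply, ContinuousLinearMap.coe_fst', ContinuousLinearMap.coe_snd',
    ContinuousLinearMap.coe_smul', Pi.smul_apply, smul_eq_mul, ContinuousLinearMap.zero_apply,
    ContinuousLinearMap.coe_sub', Pi.sub_apply, Pi.mul_apply, Pi.add_apply, Pi.pow_apply]
  ring_nf
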